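/- arXiv:0812.1030 — 3 statements merged into one kernel-verified Lean document; each statement's English description precedes it below -/
import Mathlib

section
/- Fix k₀ > 0, b₀ > 0, and a positive integer l. For N a positive integer define ρ₀ = N/(2π), a₀² = k₀/ρ₀², and let s⁺(N) be the larger root of s² + b₀ s + a₀² l²/4 = 0 (defined when b₀² ≥ a₀² l²). Then N² · s⁺(N) → -π² k₀ l² / b₀ as N → ∞. In particular, the least stable eigenvalue (l = 1) decays to zero as O(1/N²). -/
open Real Filter

theorem least_stable_eigenvalue_decay_DD (k₀ b₀ : ℝ) (hk : 0 < k₀) (hb : 0 < b₀)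
    (l : ℕ) (hl : 0 < l) :
    Filter.Tendsto
      (fun N : ℕ =>
        (N : ℝ)^2 *
          ((-b₀ + Real.sqrt (b₀^2 - (k₀ * (2 * π / N)^2) * (l : ℝ)^2)) / 2))
      Filter.atTop (nhds (-(π^2 * k₀ * (l : ℝ)^2 / b₀))) := by
  set c : ℝ := k₀ * (2 * π)^2 * (l : ℝ)^2 with hc
  have hcpos : 0 < c := by
    apply mul_pos (mul_pos hk (by positivity))
    have : (0:ℝ) < (l:ℝ) := by exact_mod_cast hl
    positivity
  -- auxiliary: the argument of sqrt tends to b₀²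
  have harg : Tendsto (fun N : ℕ => b₀^2 - (k₀ * (2 * π / N)^2) * (l : ℝ)^2)
      atTop (nhds (b₀^2)) := by
    have h0 : Tendsto (fun N : ℕ => (k₀ * (2 * π / N)^2) * (l : ℝ)^2)
        atTop (nhds 0) := by
      have h1 : Tendsto (fun N : ℕ => (2 * π / N)) atTop (nhds 0) :=
        Tendsto.div_atTop tendsto_const_nhds tendsto_natCast_atTop_atTop
      have h2 : Tendsto (fun N : ℕ => (2 * π / N)^2) atTop (nhds 0) := by
        simpa using h1.pow 2
      have := (h2.const_mul k₀).mul_const ((l:ℝ)^2)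
      simpa using this
    simpa using (tendsto_const_nhds (x := b₀^2)).sub h0
  have hsqrt : Tendsto (fun N : ℕ =>
      Real.sqrt (b₀^2 - (k₀ * (2 * π / N)^2) * (l : ℝ)^2)) atTop (nhds b₀) := by
    have := harg.sqrt
    rwa [Real.sqrt_sq hb.le] at this
  -- the rewritten form tends to the limit
  have hmain : Tendsto (fun N : ℕ =>
      -c / (2 * (Real.sqrt (b₀^2 - (k₀ * (2 * π / N)^2) * (l : ℝ)^2) + b₀)))
      atTop (nhds (-c / (2 * (b₀ + b₀)))) := by
    apply Tendsto.div tendsto_const_nhds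
    · exact ((hsqrt.add tendsto_const_nhds).const_mul 2)
    · positivity
  have hlim : -c / (2 * (b₀ + b₀)) = -(π^2 * k₀ * (l : ℝ)^2 / b₀) := by
    field_simp [hc]
    ring
  rw [← hlim]
  apply hmain.congr'
  -- eventual equality
  have hev : ∀ᶠ N : ℕ in atTop,
      (k₀ * (2 * π / N)^2) * (l : ℝ)^2 ≤ b₀^2 := by
    have : ∀ᶠ x in nhds (b₀^2 : ℝ), (0:ℝ) ≤ x := by
      filter_upwards [eventually_gt_nhds (by positivity : (0:ℝ) < b₀^2)] with x hx
      exact hx.le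
    filter_upwards [harg.eventually this] with N hN
    linarith
  filter_upwards [hev, eventually_ge_atTop 1] with N hN hN1
  have hNpos : (0:ℝ) < (N:ℝ) := by exact_mod_cast hN1
  set s := Real.sqrt (b₀^2 - (k₀ * (2 * π / N)^2) * (l : ℝ)^2) with hs
  have hs0 : 0 ≤ s := Real.sqrt_nonneg _
  have hsden : 2 * (s + b₀) ≠ 0 := by positivity
  have hsq : s^2 = b₀^2 - (k₀ * (2 * π / N)^2) * (l : ℝ)^2 := by
    rw [hs, Real.sq_sqrt (by linarith)]
  have hcN : (N:ℝ)^2 * ((k₀ * (2 * π / N)^2) * (l : ℝ)^2) = c := by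
    field_simp [hc]
    linear_combination -hc
  field_simp
  linear_combination -(N:ℝ)^2*hsq + hcN + hc
end

section
/- Fix k₀ > 0, b₀ > 0, and a positive integer l. For N a positive integer define ρ₀ = N/(2π), a₀² = k₀/ρ₀², and let s⁺(N) be the larger root of s² + b₀ s + a₀² (2l-1)²/16 = 0 (defined when the discriminant is nonnegative). Then N² · s⁺(N) → -π² k₀ (2l-1)² / (4 b₀) as N → ∞. -/
open Real Filter

theorem least_stable_eigenvalue_decay_ND (k₀ b₀ : ℝ) (hk : 0 < k₀) (hb : 0 < b₀)
    (l : ℕ) (hl : 0 < l) :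
    Filter.Tendsto
      (fun N : ℕ =>
        (N : ℝ)^2 *
          ((-b₀ + Real.sqrt (b₀^2 - (k₀ * (2 * π / N)^2) * (2 * l - 1 : ℝ)^2 / 4)) / 2))
      Filter.atTop (nhds (-(π^2 * k₀ * (2 * l - 1 : ℝ)^2 / (4 * b₀)))) := by
  set c : ℝ := π^2 * k₀ * (2 * l - 1 : ℝ)^2 with hc
  have hc0 : 0 ≤ c := by
    have h1 : (1 : ℝ) ≤ 2 * l := by
      have : (1 : ℕ) ≤ l := hl
      have : (1 : ℝ) ≤ l := by exact_mod_cast this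
      nlinarith
    positivity
  -- c / N² → 0
  have htend0 : Tendsto (fun N : ℕ => c / (N : ℝ)^2) atTop (nhds 0) := by
    have h1 : Tendsto (fun N : ℕ => ((N : ℝ)^2)) atTop atTop :=
      (tendsto_pow_atTop (n := 2) (by norm_num)).comp (tendsto_natCast_atTop_atTop (R := ℝ))
    simpa [div_eq_mul_inv] using h1.inv_tendsto_atTop.const_mul c
  -- limit of auxiliary function
  have haux : Tendsto (fun N : ℕ => -c / (2 * (Real.sqrt (b₀^2 - c / (N:ℝ)^2) + b₀)))
      atTop (nhds (-(c / (4 * b₀)))) := by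
    have hsq : Tendsto (fun N : ℕ => Real.sqrt (b₀^2 - c / (N:ℝ)^2)) atTop (nhds b₀) := by
      have : Tendsto (fun N : ℕ => b₀^2 - c / (N:ℝ)^2) atTop (nhds (b₀^2)) := by
        simpa using (tendsto_const_nhds (x := b₀^2)).sub htend0
      have := (Real.continuous_sqrt.tendsto (b₀^2)).comp this
      simpa [Real.sqrt_sq hb.le, Function.comp_def] using this
    have hden : Tendsto (fun N : ℕ => 2 * (Real.sqrt (b₀^2 - c / (N:ℝ)^2) + b₀))
        atTop (nhds (4 * b₀)) := by
      have h2 : Tendsto (fun N : ℕ => 2 * (Real.sqrt (b₀^2 - c / (N:ℝ)^2) + b₀))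
          atTop (nhds (2 * (b₀ + b₀))) :=
        (hsq.add (tendsto_const_nhds (x := b₀))).const_mul (2:ℝ)
      convert h2 using 2
      ring
    have h4b : (4 : ℝ) * b₀ ≠ 0 := by positivity
    have := (tendsto_const_nhds (x := -c)).div hden h4b
    simpa [Pi.div_def, neg_div] using this
  -- eventual equality
  have heq : ∀ᶠ N : ℕ in atTop,
      (N : ℝ)^2 * ((-b₀ + Real.sqrt (b₀^2 - (k₀ * (2 * π / N)^2) * (2 * l - 1 : ℝ)^2 / 4)) / 2)
        = -c / (2 * (Real.sqrt (b₀^2 - c / (N:ℝ)^2) + b₀)) := by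
    have hsmall : ∀ᶠ N : ℕ in atTop, c / (N:ℝ)^2 ≤ b₀^2 := by
      have hb2 : (0:ℝ) < b₀^2 := by positivity
      filter_upwards [htend0.eventually (eventually_le_nhds hb2)] with N h using h
    filter_upwards [hsmall, eventually_gt_atTop 0] with N hNs hN
    have hNpos : (0:ℝ) < (N:ℝ) := by exact_mod_cast hN
    have harg : (k₀ * (2 * π / N)^2) * (2 * l - 1 : ℝ)^2 / 4 = c / (N:ℝ)^2 := by
      field_simp [hc]
      ring
    rw [harg]
    have hroot : 0 ≤ b₀^2 - c / (N:ℝ)^2 := by linarith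
    have hden : 0 < Real.sqrt (b₀^2 - c / (N:ℝ)^2) + b₀ :=
      add_pos_of_nonneg_of_pos (Real.sqrt_nonneg _) hb
    have hkey : (Real.sqrt (b₀^2 - c / (N:ℝ)^2) - b₀) * (Real.sqrt (b₀^2 - c / (N:ℝ)^2) + b₀)
        = -(c / (N:ℝ)^2) := by
      have := Real.sq_sqrt hroot
      nlinarith [this]
    have hN2 : ((N:ℝ))^2 ≠ 0 := by positivity
    have hkey' : (Real.sqrt (b₀^2 - c / (N:ℝ)^2) - b₀) * (Real.sqrt (b₀^2 - c / (N:ℝ)^2) + b₀)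
        * (N:ℝ)^2 = -c := by
      rw [hkey]
      field_simp
    rw [eq_div_iff (by positivity : (2 * (Real.sqrt (b₀^2 - c / (N:ℝ)^2) + b₀)) ≠ 0)]
    linear_combination hkey'
  have := haux.congr' (heq.mono fun N h => h.symm)
  convert this using 2
end

section
/- Let N ≥ 1, b₀ > 0, k₀ > 0, and let A_{L-F} be the 2N×2N block matrix [[0, I], [-k₀(M + Mᵀ), -b₀ I]] where M is the N×N bidiagonal matrix with 1 on the diagonal and -1 on the superdiagonal. Then every eigenvalue of A_{L-F} has negative real part, and the sum of all 2N eigenvalues equals -N b₀. -/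
open Matrix Complex

/-- The `N×N` upper bidiagonal matrix with `1` on the diagonal and `-1` on the
superdiagonal, over `ℂ`. -/
def MmatC (N : ℕ) : Matrix (Fin N) (Fin N) ℂ :=
  Matrix.of fun i j => if j = i then 1 else if (j : ℕ) = (i : ℕ) + 1 then -1 else 0

private lemma quad_neg_re (b c : ℝ) (hb : 0 < b) (hc : 0 < c) (s : ℂ)
    (h : s ^ 2 + (b : ℂ) * s + (c : ℂ) = 0) : s.re < 0 := by
  have hre := congrArg Complex.re h
  have him := congrArg Complex.im h
  simp [pow_two, Complex.add_re, Complex.add_im, Complex.mul_re, Complex.mul_im] at hre him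
  by_contra h'
  push_neg at h'
  have h2 : s.im * (2 * s.re + b) = 0 := by nlinarith [him]
  rcases mul_eq_zero.mp h2 with h0 | h0
  · nlinarith
  · nlinarith

private lemma MmatC_real (N : ℕ) (i j : Fin N) :
    (starRingEnd ℂ) (MmatC N i j) = MmatC N i j := by
  simp only [MmatC, Matrix.of_apply]
  split_ifs <;> simp

private lemma mulVec_MmatC (N : ℕ) (x : Fin N → ℂ) (i : Fin N) :
    (MmatC N).mulVec x i =
      (fun n : ℕ => if h : n < N then x ⟨n, h⟩ else 0) i -
      (fun n : ℕ => if h : n < N then x ⟨n, h⟩ else 0) (i + 1) := by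
  set u : ℕ → ℂ := fun n => if h : n < N then x ⟨n, h⟩ else 0 with hu
  have key : (MmatC N).mulVec x i =
      ∑ n ∈ Finset.range N, ((if n = (i : ℕ) then u n else 0) +
        (if n = (i : ℕ) + 1 then -u n else 0)) := by
    rw [Matrix.mulVec, dotProduct, ← Fin.sum_univ_eq_sum_range]
    apply Finset.sum_congr rfl
    intro j _
    simp only [MmatC, Matrix.of_apply, hu, Fin.is_lt, dif_pos, Fin.eta]
    rcases eq_or_ne j i with h | h
    · subst h; simp
    · have hj : (j : ℕ) ≠ (i : ℕ) := fun hh => h (Fin.ext hh)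
      rcases eq_or_ne (j : ℕ) ((i : ℕ) + 1) with h2 | h2 <;> simp [hj, h2, h]
  rw [key, Finset.sum_add_distrib, Finset.sum_ite_eq' (Finset.range N),
    Finset.sum_ite_eq' (Finset.range N)]
  have hi : (i : ℕ) ∈ Finset.range N := by simp [i.is_lt]
  rw [if_pos hi]
  rcases lt_or_ge ((i : ℕ) + 1) N with h | h
  · simp [h, sub_eq_add_neg]
  · have : ((i : ℕ) + 1) ∉ Finset.range N := by simp; omega
    rw [if_neg this]
    have : u ((i : ℕ) + 1) = 0 := by simp [hu]; omega
    simp [this]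

private lemma transpose_part (N : ℕ) (x : Fin N → ℂ) :
    ∑ i, (starRingEnd ℂ) (x i) * ((MmatC N)ᵀ.mulVec x i) =
      (starRingEnd ℂ) (∑ i, (starRingEnd ℂ) (x i) * ((MmatC N).mulVec x i)) := by
  simp only [Matrix.mulVec, dotProduct, Matrix.transpose_apply, map_sum, Finset.mul_sum]
  rw [Finset.sum_comm]
  apply Finset.sum_congr rfl; intro i _
  apply Finset.sum_congr rfl; intro j _
  rw [_root_.map_mul, _root_.map_mul, MmatC_real, Complex.conj_conj]
  ring

private lemma key_posdef (N : ℕ) (x : Fin N → ℂ) (hx : x ≠ 0) :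
    ∃ r : ℝ, 0 < r ∧
      ∑ i, (starRingEnd ℂ) (x i) * ((MmatC N + (MmatC N)ᵀ).mulVec x i) = (r : ℂ) := by
  set u : ℕ → ℂ := fun n => if h : n < N then x ⟨n, h⟩ else 0 with hu
  set T : ℂ := ∑ i, (starRingEnd ℂ) (x i) * ((MmatC N).mulVec x i) with hT
  have hsum : ∑ i, (starRingEnd ℂ) (x i) * ((MmatC N + (MmatC N)ᵀ).mulVec x i)
      = T + (starRingEnd ℂ) T := by
    rw [hT, ← transpose_part, ← Finset.sum_add_distrib]
    apply Finset.sum_congr rfl; intro i _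
    rw [Matrix.add_mulVec]; simp [mul_add]
  have hTr : T = ∑ n ∈ Finset.range N, (starRingEnd ℂ) (u n) * (u n - u (n + 1)) := by
    rw [hT, ← Fin.sum_univ_eq_sum_range]
    apply Finset.sum_congr rfl; intro i _
    rw [mulVec_MmatC]
    congr 1
    simp [hu, i.is_lt]
  have per : ∀ a b : ℂ, 2 * ((starRingEnd ℂ) a * (a - b)).re
      = Complex.normSq a - Complex.normSq b + Complex.normSq (a - b) := by
    intro a b
    simp [Complex.normSq_apply, Complex.mul_re, Complex.sub_re, Complex.sub_im]
    ring
  have h2T : 2 * T.re = Complex.normSq (u 0)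
      + ∑ n ∈ Finset.range N, Complex.normSq (u n - u (n + 1)) := by
    rw [hTr, Complex.re_sum, Finset.mul_sum]
    rw [Finset.sum_congr rfl fun n _ => per (u n) (u (n + 1)),
      Finset.sum_add_distrib, Finset.sum_range_sub' (fun n => Complex.normSq (u n))]
    have : u N = 0 := by simp [hu]
    rw [this]; simp
  refine ⟨2 * T.re, ?_, ?_⟩
  · rcases Function.ne_iff.mp hx with ⟨i, hi⟩
    by_contra hle
    push_neg at hle
    have hsumnn : 0 ≤ ∑ n ∈ Finset.range N, Complex.normSq (u n - u (n + 1)) :=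
      Finset.sum_nonneg fun n _ => Complex.normSq_nonneg _
    have h0 : Complex.normSq (u 0) = 0 ∧
        ∑ n ∈ Finset.range N, Complex.normSq (u n - u (n + 1)) = 0 := by
      constructor <;> nlinarith [Complex.normSq_nonneg (u 0)]
    have hstep : ∀ n ∈ Finset.range N, Complex.normSq (u n - u (n + 1)) = 0 := by
      rw [← Finset.sum_eq_zero_iff_of_nonneg fun n _ => Complex.normSq_nonneg _]
      exact h0.2
    have hall : ∀ n, u n = 0 := by
      intro n
      induction n with
      | zero => exact Complex.normSq_eq_zero.mp h0.1
      | succ m ih =>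
        rcases lt_or_ge m N with h | h
        · have := hstep m (Finset.mem_range.mpr h)
          have := sub_eq_zero.mp (Complex.normSq_eq_zero.mp this)
          rw [← this, ih]
        · simp [hu]; omega
    have : u i = x i := by simp [hu, i.is_lt]
    exact hi (by rw [← this, hall]; simp)
  · rw [hsum, Complex.add_conj]

theorem closed_loop_stable_and_trace (N : ℕ) (hN : 1 ≤ N) (b₀ k₀ : ℝ)
    (hb : 0 < b₀) (hk : 0 < k₀) :
    let A : Matrix (Fin N ⊕ Fin N) (Fin N ⊕ Fin N) ℂ :=
      Matrix.fromBlocks 0 1 (-((k₀ : ℂ) • (MmatC N + (MmatC N)ᵀ))) (-((b₀ : ℂ) • 1))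
    (∀ s : ℂ, (∃ v : Fin N ⊕ Fin N → ℂ, v ≠ 0 ∧ A.mulVec v = s • v) → s.re < 0) ∧
    A.charpoly.roots.sum = -(N : ℂ) * b₀ := by
  intro A
  constructor
  · rintro s ⟨v, hv, hAv⟩
    set x : Fin N → ℂ := fun i => v (Sum.inl i) with hxdef
    set y : Fin N → ℂ := fun i => v (Sum.inr i) with hydef
    have hv' : v = Sum.elim x y := by funext j; rcases j with i | i <;> rfl
    rw [hv', Matrix.fromBlocks_mulVec] at hAv
    have h1 : ∀ i, y i = s * x i := by
      intro i
      have := congrFun hAv (Sum.inl i)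
      simpa [Matrix.zero_mulVec, Matrix.one_mulVec] using this
    have h2 : ∀ i, (k₀ : ℂ) * ((MmatC N + (MmatC N)ᵀ).mulVec x i)
        = -(s ^ 2 + (b₀ : ℂ) * s) * x i := by
      intro i
      have h := congrFun hAv (Sum.inr i)
      simp only [Sum.elim_inr, Pi.add_apply, Matrix.neg_mulVec, Pi.neg_apply,
        Matrix.smul_mulVec, Pi.smul_apply, Matrix.one_mulVec, smul_eq_mul,
        Pi.smul_apply, Sum.elim_comp_inl, Sum.elim_comp_inr] at h
      rw [h1 i] at h
      have h1i := h1 i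
      ring_nf
      ring_nf at h
      linear_combination -h
    have hx0 : x ≠ 0 := by
      intro h0
      apply hv
      rw [hv']
      funext j
      rcases j with i | i
      · simp [h0]
      · simp [h1 i, h0]
    obtain ⟨r, hr, hsum⟩ := key_posdef N x hx0
    set S : ℝ := ∑ i, Complex.normSq (x i) with hS
    have hSpos : 0 < S := by
      rcases Function.ne_iff.mp hx0 with ⟨i, hi⟩
      have : x i ≠ 0 := by simpa using hi
      exact Finset.sum_pos' (fun j _ => Complex.normSq_nonneg _)
        ⟨i, Finset.mem_univ i, Complex.normSq_pos.mpr this⟩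
    have heq : (k₀ : ℂ) * (r : ℂ) = -(s ^ 2 + (b₀ : ℂ) * s) * (S : ℂ) := by
      calc (k₀ : ℂ) * (r : ℂ)
          = ∑ i, (starRingEnd ℂ) (x i) * ((k₀ : ℂ) * ((MmatC N + (MmatC N)ᵀ).mulVec x i)) := by
            rw [← hsum, Finset.mul_sum]; apply Finset.sum_congr rfl; intro i _; ring
        _ = ∑ i, -(s ^ 2 + (b₀ : ℂ) * s) * ((starRingEnd ℂ) (x i) * x i) := by
            apply Finset.sum_congr rfl; intro i _; rw [h2 i]; ring
        _ = -(s ^ 2 + (b₀ : ℂ) * s) * (S : ℂ) := by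
            rw [← Finset.mul_sum, hS]
            push_cast
            congr 1
            apply Finset.sum_congr rfl; intro i _
            rw [Complex.normSq_eq_conj_mul_self]
    have hc : 0 < k₀ * r / S := by positivity
    apply quad_neg_re b₀ (k₀ * r / S) hb hc
    have hSne : (S : ℂ) ≠ 0 := by exact_mod_cast ne_of_gt hSpos
    push_cast
    field_simp
    linear_combination heq
  · rw [← Matrix.trace_eq_sum_roots_charpoly]
    simp [A, Matrix.trace, Fintype.sum_sum_type, Matrix.fromBlocks_apply₁₁,
      Matrix.fromBlocks_apply₂₂, Matrix.one_apply]
end
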